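/- There exists C > 0 such that for every finitely supported f : ℕ×V₂ → ℂ: ‖(Λ^f)^{−2}(A_{G^f}(A_{G^f} f))‖_{ℓ²(ℕ×V₂, m^f)} ≤ C·‖f‖_{ℓ²(ℕ×V₂, m^f)}, where (Λ^f)^{−2} denotes multiplication by (x + 1/2)^{−2} in the first variable. Hence (Λ^f)^{−2} A_{G^f}² extends to a bounded operator on ℓ²(ℕ×V₂, m^f). -/

import Mathlib

noncomputable section

open Complex

/-- `(A_ℕ f)(n) = (i/2)·((n − 1/2)·f(n−1) − (n + 1/2)·f(n+1))`, with `f(−1) = 0`. -/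
def aN (f : ℕ → ℂ) : ℕ → ℂ := fun n =>
  (I / 2) * (((n : ℂ) - 1 / 2) * (if n = 0 then 0 else f (n - 1))
    - ((n : ℂ) + 1 / 2) * f (n + 1))

/-- The gauge transform `T_{m→m'} f = (x ↦ √(m(x)/m'(x))·f(x))`. -/
def Tw {V : Type*} (m m' : V → ℝ) (f : V → ℂ) : V → ℂ :=
  fun x => (Real.sqrt (m x / m' x) : ℂ) * f x

/-- Weight of the funnel half-line: `m₁^f(n) = eⁿ`. -/
def m1F : ℕ → ℝ := fun n => Real.exp n

/-- `A_{m₁^f} := T_{1→m₁^f} ∘ A_ℕ ∘ T_{1→m₁^f}⁻¹`. -/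
def aM1F (f : ℕ → ℂ) : ℕ → ℂ :=
  Tw (fun _ => 1) m1F (aN (Tw m1F (fun _ => 1) f))

/-- `A_{G^f} := A_{m₁^f} ⊗ 1`. -/
def aGF {V₂ : Type*} (f : ℕ × V₂ → ℂ) : ℕ × V₂ → ℂ := fun v =>
  aM1F (fun n => f (n, v.2)) v.1

/-- Weight of the funnel: `m^f(x,y) = eˣ·m₂`. -/
def mF (V₂ : Type*) (m₂ : ℝ) : ℕ × V₂ → ℝ := fun v => Real.exp v.1 * m₂

/-- The ℓ²-norm with weight `m`. -/
def nrm {V : Type*} (m : V → ℝ) (f : V → ℂ) : ℝ :=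
  Real.sqrt (∑' x : V, m x * ‖f x‖ ^ 2)


/-- `(Λ^f)^{−2}`: multiplication by `(x + 1/2)^{−2}` in the first variable. -/
def lamFinv2 {V₂ : Type*} (f : ℕ × V₂ → ℂ) : ℕ × V₂ → ℂ := fun v =>
  (((v.1 : ℝ) + 1 / 2) ^ (2 : ℕ) : ℝ)⁻¹ * f v

/-- The standard (unweighted) `ℓ²` space over `V`. -/
abbrev L2 (V : Type*) := lp (fun _ : V => ℂ) 2

/-- The isometry `ℓ²(V,m) → ℓ²(V)`, `f ↦ √m·f`. -/
def emb {V : Type*} (m : V → ℝ) (f : V → ℂ) : V → ℂ :=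
  fun v => (Real.sqrt (m v) : ℂ) * f v

/-- The inverse isometry `ℓ²(V) → ℓ²(V,m)`, `g ↦ g/√m`. -/
def unemb {V : Type*} (m : V → ℝ) (g : V → ℂ) : V → ℂ :=
  fun v => g v / (Real.sqrt (m v) : ℂ)

-- aux
def BB {V₂ : Type*} (g : ℕ × V₂ → ℂ) : ℕ × V₂ → ℂ := fun v =>
  (((v.1 : ℝ) + 1 / 2) ^ (2 : ℕ) : ℝ)⁻¹ * aN (aN (fun m => g (m, v.2))) v.1

lemma aN_mul (c : ℂ) (f : ℕ → ℂ) (n : ℕ) : aN (fun k => c * f k) n = c * aN f n := by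
  unfold aN; split_ifs <;> ring

lemma aN_mul' (c : ℂ) (f : ℕ → ℂ) : aN (fun k => c * f k) = fun n => c * aN f n :=
  funext (aN_mul c f)

lemma aN_add (f g : ℕ → ℂ) (n : ℕ) : aN (fun k => f k + g k) n = aN f n + aN g n := by
  unfold aN; split_ifs <;> ring

lemma sqrtexp_ne (n : ℕ) : ((Real.sqrt (Real.exp n) : ℝ) : ℂ) ≠ 0 :=
  Complex.ofReal_ne_zero.2 (ne_of_gt (Real.sqrt_pos.2 (Real.exp_pos _)))

lemma Tw_exp (f : ℕ → ℂ) :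
    Tw m1F (fun _ => 1) f = fun k : ℕ => ((Real.sqrt (Real.exp k) : ℝ) : ℂ) * f k := by
  funext k; simp [Tw, m1F]

lemma aM1F_eq (f : ℕ → ℂ) (n : ℕ) :
    aM1F f n = (((Real.sqrt (Real.exp n) : ℝ) : ℂ))⁻¹
      * aN (fun k : ℕ => ((Real.sqrt (Real.exp k) : ℝ) : ℂ) * f k) n := by
  rw [aM1F, Tw_exp]
  simp only [Tw, m1F, one_div, Real.sqrt_inv, Complex.ofReal_inv]

lemma aM1F_aM1F (f : ℕ → ℂ) (n : ℕ) :
    aM1F (fun k => aM1F f k) n = (((Real.sqrt (Real.exp n) : ℝ) : ℂ))⁻¹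
      * aN (aN (fun j : ℕ => ((Real.sqrt (Real.exp j) : ℝ) : ℂ) * f j)) n := by
  have h : (fun k : ℕ => ((Real.sqrt (Real.exp k) : ℝ) : ℂ) * aM1F f k)
      = fun k : ℕ => aN (fun j : ℕ => ((Real.sqrt (Real.exp j) : ℝ) : ℂ) * f j) k := by
    funext k
    rw [aM1F_eq, ← mul_assoc, mul_inv_cancel₀ (sqrtexp_ne k), one_mul]
  rw [aM1F_eq, h]

lemma scal (a b c X : ℂ) (ha : a ≠ 0) (hb : b ≠ 0) :
    a * b * (c * (a⁻¹ * (b⁻¹ * X))) = c * X := by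
  field_simp

lemma conj_eq {V₂ : Type*} {m₂ : ℝ} (hm₂ : 0 < m₂) (g : ℕ × V₂ → ℂ) (v : ℕ × V₂) :
    emb (mF V₂ m₂) (lamFinv2 (aGF (aGF (unemb (mF V₂ m₂) g)))) v = BB g v := by
  obtain ⟨n, y⟩ := v
  have ht : ((Real.sqrt m₂ : ℝ) : ℂ) ≠ 0 :=
    Complex.ofReal_ne_zero.2 (ne_of_gt (Real.sqrt_pos.2 hm₂))
  have h1 : (fun j : ℕ => ((Real.sqrt (Real.exp j) : ℝ) : ℂ) * unemb (mF V₂ m₂) g (j, y))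
      = fun j : ℕ => (((Real.sqrt m₂ : ℝ) : ℂ))⁻¹ * g (j, y) := by
    funext j
    simp only [unemb, mF, Real.sqrt_mul (Real.exp_nonneg _), Complex.ofReal_mul]
    field_simp
  simp only [emb, lamFinv2, aGF, BB]
  rw [aM1F_aM1F, h1, aN_mul', aN_mul]
  rw [mF, Real.sqrt_mul (Real.exp_nonneg _), Complex.ofReal_mul]
  exact scal _ _ _ _ (sqrtexp_ne n) ht

lemma norm_aN_le (f : ℕ → ℂ) (n : ℕ) :
    ‖aN f n‖ ≤ 1/2 * (((n:ℝ) + 1/2) * ((if n = 0 then 0 else ‖f (n-1)‖) + ‖f (n+1)‖)) := by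
  unfold aN
  rw [norm_mul]
  have h1 : ‖(I/2 : ℂ)‖ = 1/2 := by
    rw [norm_div, Complex.norm_I]; norm_num
  rw [h1]
  have h2 : ‖((n:ℂ) - 1/2)‖ ≤ (n:ℝ) + 1/2 := by
    rw [show ((n:ℂ) - 1/2) = (((n:ℝ) - 1/2 : ℝ) : ℂ) by push_cast; ring, Complex.norm_real,
      Real.norm_eq_abs, abs_le]
    constructor
    · nlinarith [Nat.cast_nonneg (α := ℝ) n]
    · nlinarith [Nat.cast_nonneg (α := ℝ) n]
  have h3 : ‖((n:ℂ) + 1/2)‖ = (n:ℝ) + 1/2 := by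
    rw [show ((n:ℂ) + 1/2) = (((n:ℝ) + 1/2 : ℝ) : ℂ) by push_cast; ring, Complex.norm_real,
      Real.norm_eq_abs, _root_.abs_of_nonneg (by positivity)]
  have h4 : ‖(if n = 0 then (0:ℂ) else f (n-1))‖ = (if n = 0 then 0 else ‖f (n-1)‖) := by
    split_ifs <;> simp
  have t1 := norm_sub_le (((n:ℂ) - 1/2) * (if n = 0 then 0 else f (n-1)))
    (((n:ℂ) + 1/2) * f (n+1))
  rw [norm_mul, norm_mul, h3, h4] at t1
  have hif : (0:ℝ) ≤ (if n = 0 then 0 else ‖f (n-1)‖) := by split_ifs <;> positivity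
  nlinarith [norm_nonneg (f (n+1)), norm_nonneg ((n:ℂ) - 1/2), mul_le_mul_of_nonneg_right h2 hif]

lemma norm_B_le {V₂ : Type*} (g : ℕ × V₂ → ℂ) (v : ℕ × V₂) :
    ‖BB g v‖ ≤ 2 * ((if v.1 < 2 then 0 else ‖g (v.1 - 2, v.2)‖) + ‖g v‖ + ‖g (v.1 + 2, v.2)‖) := by
  obtain ⟨n, y⟩ := v
  have hw : (0:ℝ) < (((n:ℝ) + 1/2) ^ (2:ℕ)) := by positivity
  have hnorm : ‖BB g (n,y)‖ = ((((n:ℝ) + 1/2) ^ (2:ℕ))⁻¹) * ‖aN (aN (fun m => g (m, y))) n‖ := by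
    simp only [BB]
    rw [norm_mul, Complex.norm_real, Real.norm_eq_abs, _root_.abs_of_nonneg (by positivity)]
  rw [hnorm, inv_mul_le_iff₀ hw]
  set f : ℕ → ℂ := fun m => g (m, y) with hf
  match n with
  | 0 =>
    have a1 := norm_aN_le (aN f) 0
    have a2 := norm_aN_le f 1
    simp only [if_pos rfl, if_neg (by norm_num : (1:ℕ) ≠ 0)] at a1 a2
    norm_num at a1 a2 ⊢
    simp only [show ∀ k, g (k, y) = f k from fun _ => rfl]
    nlinarith [norm_nonneg (f 0), norm_nonneg (f 2), norm_nonneg (aN f 1)]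
  | 1 =>
    have a1 := norm_aN_le (aN f) 1
    have a2 := norm_aN_le f 0
    have a3 := norm_aN_le f 2
    simp only [if_neg (by norm_num : (1:ℕ) ≠ 0), if_pos rfl,
      if_neg (by norm_num : (2:ℕ) ≠ 0)] at a1 a2 a3
    norm_num at a1 a2 a3 ⊢
    simp only [show ∀ k, g (k, y) = f k from fun _ => rfl]
    nlinarith [norm_nonneg (f 1), norm_nonneg (f 3), norm_nonneg (aN f 0), norm_nonneg (aN f 2)]
  | (m+2) =>
    have a1 := norm_aN_le (aN f) (m+2)
    have a2 := norm_aN_le f (m+1)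
    have a3 := norm_aN_le f (m+3)
    simp only [if_neg (by omega : ¬ m+2 = 0), if_neg (by omega : ¬ m+1 = 0),
      if_neg (by omega : ¬ m+3 = 0), show m+2-1 = m+1 from rfl, show m+1-1 = m from rfl,
      show m+3-1 = m+2 from rfl, show m+1+1 = m+2 from rfl, show m+2+1 = m+3 from rfl,
      show m+3+1 = m+4 from rfl] at a1 a2 a3
    rw [if_neg (by omega : ¬ m+2 < 2)]
    push_cast at a1 a2 a3 ⊢
    have h0 : (0:ℝ) ≤ (m:ℝ) := Nat.cast_nonneg _
    show ‖aN (aN f) (m+2)‖ ≤ _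
    nlinarith [norm_nonneg (f m), norm_nonneg (f (m+2)), norm_nonneg (f (m+4)),
      norm_nonneg (aN f (m+1)), norm_nonneg (aN f (m+3)),
      mul_le_mul_of_nonneg_left a2 (by positivity : (0:ℝ) ≤ 1/2 * ((m:ℝ)+2+1/2)),
      mul_le_mul_of_nonneg_left a3 (by positivity : (0:ℝ) ≤ 1/2 * ((m:ℝ)+2+1/2))]

section Core
variable {V₂ : Type*}

def shft : ℕ × V₂ → ℕ × V₂ := fun v => (v.1 + 2, v.2)

lemma shft_inj : Function.Injective (shft (V₂ := V₂)) := by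
  rintro ⟨a, b⟩ ⟨c, d⟩ h
  simp only [shft, Prod.mk.injEq] at h
  exact Prod.ext (by omega) h.2

lemma core_bound (g : ℕ × V₂ → ℂ) (hq : Summable fun v => ‖g v‖ ^ 2) :
    Summable (fun v => ‖BB g v‖ ^ 2) ∧
      ∑' v, ‖BB g v‖ ^ 2 ≤ 36 * ∑' v, ‖g v‖ ^ 2 := by
  set q : ℕ × V₂ → ℝ := fun v => ‖g v‖ ^ 2 with hqdef
  set h1sq : ℕ × V₂ → ℝ := fun w => if w.1 < 2 then 0 else q (w.1 - 2, w.2) with h1def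
  have hcomp : h1sq ∘ shft = q := by
    funext v
    simp only [h1def, shft, Function.comp_apply]
    split_ifs with h
    · omega
    simp
  have hvanish : ∀ w ∉ Set.range (shft (V₂ := V₂)), h1sq w = 0 := by
    rintro ⟨a, b⟩ hw
    simp only [h1def]
    rw [if_pos]
    by_contra hab
    exact hw ⟨(a - 2, b), by simp only [shft]; exact Prod.ext (by omega) rfl⟩
  have hs1 : Summable h1sq := (Function.Injective.summable_iff shft_inj hvanish).1
    (by rw [hcomp]; exact hq)
  have ht1 : ∑' w, h1sq w = ∑' v, q v := by
    rw [← Function.Injective.tsum_eq shft_inj (f := h1sq)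
      (fun w hw => by_contra fun hr => hw (hvanish w hr))]
    exact tsum_congr fun v => congrFun hcomp v
  have hs3 : Summable (fun v : ℕ × V₂ => q (shft v)) := hq.comp_injective shft_inj
  have ht3 : ∑' v, q (shft v) ≤ ∑' v, q v :=
    Summable.tsum_le_tsum_of_inj shft shft_inj (fun c _ => by positivity) (fun b => le_rfl) hs3 hq
  have hqnn : ∀ v, (0:ℝ) ≤ q v := fun v => by positivity
  have hmaj : Summable (fun v => h1sq v + q v + q (shft v)) := (hs1.add hq).add hs3
  have hpt : ∀ v, ‖BB g v‖ ^ 2 ≤ 12 * (h1sq v + q v + q (shft v)) := by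
    intro v
    have hb := norm_B_le g v
    have hx : (0:ℝ) ≤ (if v.1 < 2 then 0 else ‖g (v.1 - 2, v.2)‖) := by split_ifs <;> positivity
    have hsq : (if v.1 < 2 then (0:ℝ) else ‖g (v.1 - 2, v.2)‖) ^ 2 = h1sq v := by
      simp only [h1def, hqdef]; split_ifs <;> simp
    have h2 : ‖BB g v‖ ^ 2 ≤ (2 * ((if v.1 < 2 then 0 else ‖g (v.1 - 2, v.2)‖) + ‖g v‖ + ‖g (v.1 + 2, v.2)‖)) ^ 2 := by
      apply pow_le_pow_left₀ (norm_nonneg _) hb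
    refine h2.trans ?_
    rw [show (12:ℝ) * (h1sq v + q v + q (shft v)) = 12 * ((if v.1 < 2 then (0:ℝ) else ‖g (v.1 - 2, v.2)‖) ^ 2 + q v + q (shft v)) by rw [hsq]]
    simp only [hqdef, shft]
    nlinarith [hx, norm_nonneg (g v), norm_nonneg (g (v.1 + 2, v.2)), sq_nonneg ((if v.1 < 2 then (0:ℝ) else ‖g (v.1 - 2, v.2)‖) - ‖g v‖), sq_nonneg ((if v.1 < 2 then (0:ℝ) else ‖g (v.1 - 2, v.2)‖) - ‖g (v.1 + 2, v.2)‖), sq_nonneg (‖g v‖ - ‖g (v.1 + 2, v.2)‖)]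
  have hsB : Summable (fun v => ‖BB g v‖ ^ 2) :=
    Summable.of_nonneg_of_le (fun v => by positivity) hpt (hmaj.mul_left 12)
  refine ⟨hsB, ?_⟩
  calc ∑' v, ‖BB g v‖ ^ 2 ≤ ∑' v, 12 * (h1sq v + q v + q (shft v)) :=
        Summable.tsum_le_tsum hpt hsB (hmaj.mul_left 12)
    _ = 12 * ((∑' v, h1sq v) + (∑' v, q v) + (∑' v, q (shft v))) := by
        rw [tsum_mul_left, Summable.tsum_add (hs1.add hq) hs3, Summable.tsum_add hs1 hq]
    _ ≤ 12 * ((∑' v, q v) + (∑' v, q v) + (∑' v, q v)) := by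
        rw [ht1]; gcongr
    _ = 36 * ∑' v, q v := by ring
end Core

lemma nrm_eq_emb {V : Type*} (m : V → ℝ) (hm : ∀ v, 0 ≤ m v) (h : V → ℂ) :
    nrm m h = Real.sqrt (∑' v, ‖emb m h v‖ ^ 2) := by
  unfold nrm emb
  congr 1
  refine tsum_congr fun v => ?_
  rw [norm_mul, Complex.norm_real, Real.norm_eq_abs, _root_.abs_of_nonneg (Real.sqrt_nonneg _),
    mul_pow, Real.sq_sqrt (hm v)]

lemma unemb_emb {V : Type*} {m : V → ℝ} (hm : ∀ v, 0 < m v) (f : V → ℂ) :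
    unemb m (emb m f) = f := by
  funext v
  simp only [unemb, emb]
  exact mul_div_cancel_left₀ _ (Complex.ofReal_ne_zero.2 (ne_of_gt (Real.sqrt_pos.2 (hm v))))

lemma aN_add' (f g : ℕ → ℂ) : aN (fun k => f k + g k) = fun n => aN f n + aN g n :=
  funext (aN_add f g)

lemma BB_add {V₂ : Type*} (g h : ℕ × V₂ → ℂ) :
    BB (fun v => g v + h v) = fun v => BB g v + BB h v := by
  funext v
  simp only [BB]
  rw [aN_add', aN_add, mul_add]

lemma BB_smul {V₂ : Type*} (c : ℂ) (g : ℕ × V₂ → ℂ) :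
    BB (fun v => c * g v) = fun v => c * BB g v := by
  funext v
  simp only [BB]
  rw [aN_mul', aN_mul]
  ring

lemma two_toReal : ((2:ENNReal)).toReal = ((2:ℕ):ℝ) := by simp

lemma rpow_eq_pow2 (x : ℝ) : x ^ ((2:ENNReal)).toReal = x ^ (2:ℕ) := by
  rw [two_toReal, Real.rpow_natCast]

lemma memBB {V₂ : Type*} (g : L2 (ℕ × V₂)) : Memℓp (BB (g : ℕ × V₂ → ℂ)) 2 := by
  apply memℓp_gen
  have hq : Summable fun v => ‖(g : ℕ × V₂ → ℂ) v‖ ^ (2:ℕ) := by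
    have := (lp.memℓp g).summable (by norm_num [two_toReal] : 0 < ((2:ENNReal)).toReal)
    simpa only [rpow_eq_pow2] using this
  have := (core_bound (g : ℕ × V₂ → ℂ) hq).1
  simpa only [rpow_eq_pow2] using this

def BL (V₂ : Type*) : L2 (ℕ × V₂) →ₗ[ℂ] L2 (ℕ × V₂) where
  toFun g := ⟨BB (g : ℕ × V₂ → ℂ), memBB g⟩
  map_add' g h := by
    apply lp.ext
    show BB (fun w => (g : ℕ × V₂ → ℂ) w + (h : ℕ × V₂ → ℂ) w)
        = fun v => BB (g : ℕ × V₂ → ℂ) v + BB (h : ℕ × V₂ → ℂ) v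
    exact BB_add _ _
  map_smul' c g := by
    apply lp.ext
    show BB (fun w => c * (g : ℕ × V₂ → ℂ) w) = fun v => c * BB (g : ℕ × V₂ → ℂ) v
    exact BB_smul _ _

lemma BL_bound {V₂ : Type*} (g : L2 (ℕ × V₂)) : ‖BL V₂ g‖ ≤ 6 * ‖g‖ := by
  have hp : 0 < ((2:ENNReal)).toReal := by rw [two_toReal]; norm_num
  apply lp.norm_le_of_tsum_le hp (by positivity)
  have hq : Summable fun v => ‖(g : ℕ × V₂ → ℂ) v‖ ^ (2:ℕ) := by
    simpa only [rpow_eq_pow2] using (lp.memℓp g).summable hp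
  have hcore := core_bound (g : ℕ × V₂ → ℂ) hq
  have hnorm : ‖g‖ ^ (2:ℕ) = ∑' v, ‖(g : ℕ × V₂ → ℂ) v‖ ^ (2:ℕ) := by
    simpa only [rpow_eq_pow2] using lp.norm_rpow_eq_tsum hp g
  calc ∑' i, ‖(BL V₂ g : ℕ × V₂ → ℂ) i‖ ^ ((2:ENNReal)).toReal
      = ∑' i, ‖BB (g : ℕ × V₂ → ℂ) i‖ ^ (2:ℕ) := by
        exact tsum_congr fun i => by rw [rpow_eq_pow2]; rfl
    _ ≤ 36 * ∑' v, ‖(g : ℕ × V₂ → ℂ) v‖ ^ (2:ℕ) := hcore.2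
    _ = (6 * ‖g‖) ^ ((2:ENNReal)).toReal := by
        rw [rpow_eq_pow2, mul_pow, hnorm]; norm_num

def TT (V₂ : Type*) : L2 (ℕ × V₂) →L[ℂ] L2 (ℕ × V₂) :=
  (BL V₂).mkContinuous 6 BL_bound

/-- **Bound `‖(Λ^f)^{−2}A_{G^f}² f‖ ≤ C·‖f‖` on `ℓ²(ℕ×V₂, m^f)`; hence
`(Λ^f)^{−2}A_{G^f}²` extends to a bounded operator on `ℓ²(ℕ×V₂, m^f)`.** -/
theorem stmt16 {V₂ : Type*} [Fintype V₂] (m₂ : ℝ) (hm₂ : 0 < m₂) :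
    (∃ C > 0, ∀ f : ℕ × V₂ → ℂ, (Function.support f).Finite →
      nrm (mF V₂ m₂) (lamFinv2 (aGF (aGF f))) ≤ C * nrm (mF V₂ m₂) f) ∧
    (∃ T : L2 (ℕ × V₂) →L[ℂ] L2 (ℕ × V₂),
      ∀ g : L2 (ℕ × V₂), (Function.support (g : ℕ × V₂ → ℂ)).Finite →
        ((T g : ℕ × V₂ → ℂ)
          = emb (mF V₂ m₂) (lamFinv2 (aGF (aGF (unemb (mF V₂ m₂) g)))))) := by
  have hmnn : ∀ v : ℕ × V₂, 0 ≤ mF V₂ m₂ v := fun v => mul_nonneg (Real.exp_nonneg _) hm₂.le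
  have hmpos : ∀ v : ℕ × V₂, 0 < mF V₂ m₂ v := fun v => mul_pos (Real.exp_pos _) hm₂
  constructor
  · refine ⟨6, by norm_num, fun f hf => ?_⟩
    set g : ℕ × V₂ → ℂ := emb (mF V₂ m₂) f with hg
    have hq : Summable fun v => ‖g v‖ ^ 2 := by
      have hsupp : (Function.support g).Finite := by
        apply hf.subset
        intro v hv
        simp only [Function.mem_support] at hv ⊢
        intro h0
        apply hv
        rw [hg]; simp only [emb]; rw [h0, mul_zero]
      apply summable_of_ne_finset_zero (s := hsupp.toFinset)
      intro v hv
      have hzero : g v = 0 := Function.notMem_support.1 (fun hmem => hv (hsupp.mem_toFinset.2 hmem))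
      rw [hzero]; simp
    have key : emb (mF V₂ m₂) (lamFinv2 (aGF (aGF f))) = BB g := by
      have hfg : f = unemb (mF V₂ m₂) g := by rw [hg, unemb_emb hmpos]
      funext v
      conv_lhs => rw [hfg]
      exact conj_eq hm₂ g v
    rw [nrm_eq_emb _ hmnn, nrm_eq_emb _ hmnn, key, ← hg]
    obtain ⟨hsB, hle⟩ := core_bound g hq
    calc Real.sqrt (∑' v, ‖BB g v‖ ^ 2) ≤ Real.sqrt (36 * ∑' v, ‖g v‖ ^ 2) :=
          Real.sqrt_le_sqrt hle
      _ = 6 * Real.sqrt (∑' v, ‖g v‖ ^ 2) := by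
          rw [show (36:ℝ) = 6 ^ 2 by norm_num, Real.sqrt_mul (by positivity) _,
            Real.sqrt_sq (by norm_num)]
  · refine ⟨TT V₂, fun g _ => ?_⟩
    funext v
    show BB (g : ℕ × V₂ → ℂ) v = _
    exact (conj_eq hm₂ (g : ℕ × V₂ → ℂ) v).symm
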